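/- Let M be a symmetric n×n matrix over GF(2) (n ≥ 2) and let a ≠ b be indices with M_{aa} = 0, M_{bb} = 1 and M_{ab} = 1. Let M″ be the (n−2)×(n−2) matrix indexed by the indices x, y distinct from a and b whose (x,y) entry is M_{xy} + M_{xa}·M_{yb} + M_{xb}·M_{ya} + M_{xa}·M_{ya}. Then rank(M) = rank(M″) + 2; equivalently, M and M″ have the same nullity over GF(2). -/
import Mathlib


open Matrix BigOperators

/-- The graph bracket polynomial of a looped graph specified by its Boolean
adjacency matrix `M` over `GF(2)`:
`[G](A,B,d) = ∑_Δ A^{ν(Δ)} B^{ρ(Δ)} d^{ν(M+Δ)}`, the sum over all diagonal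
matrices `Δ` over `GF(2)` (encoded by their diagonal functions `f`). -/
noncomputable def gBracket {V : Type*} [Fintype V] [DecidableEq V] {K : Type*} [CommRing K]
    (M : Matrix V V (ZMod 2)) (A B d : K) : K :=
  ∑ f : V → ZMod 2,
    A ^ (Fintype.card V - (Matrix.diagonal f).rank)
      * B ^ (Matrix.diagonal f).rank
      * d ^ (Fintype.card V - (M + Matrix.diagonal f).rank)

section Aux

variable {K : Type*} [Field K]

def subProdEquiv {M N : Type*} [AddCommGroup M] [AddCommGroup N] [Module K M] [Module K N]
    (p : Submodule K M) (q : Submodule K N) : (p.prod q : Submodule K (M × N)) ≃ₗ[K] p × q where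
  toFun x := (⟨x.1.1, x.2.1⟩, ⟨x.1.2, x.2.2⟩)
  invFun y := ⟨(y.1.1, y.2.1), ⟨y.1.2, y.2.2⟩⟩
  map_add' _ _ := rfl
  map_smul' _ _ := rfl
  left_inv _ := rfl
  right_inv _ := rfl

lemma finrank_prod_submodule {M N : Type*} [AddCommGroup M] [AddCommGroup N] [Module K M]
    [Module K N] [FiniteDimensional K M] [FiniteDimensional K N]
    (p : Submodule K M) (q : Submodule K N) :
    Module.finrank K (p.prod q : Submodule K (M × N)) =
      Module.finrank K p + Module.finrank K q := by
  rw [LinearEquiv.finrank_eq (subProdEquiv p q), Module.finrank_prod]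

lemma rank_fromBlocks_diag {m n : Type*} [Fintype m] [Fintype n] [DecidableEq m] [DecidableEq n]
    (A : Matrix m m K) (D : Matrix n n K) :
    (Matrix.fromBlocks A 0 0 D).rank = A.rank + D.rank := by
  classical
  let e : ((m ⊕ n) → K) ≃ₗ[K] (m → K) × (n → K) :=
    LinearEquiv.sumArrowLequivProdArrow m n K K
  have hmap : Submodule.map (e : ((m ⊕ n) → K) →ₗ[K] (m → K) × (n → K))
      (LinearMap.range (Matrix.fromBlocks A 0 0 D).mulVecLin)
      = (LinearMap.range A.mulVecLin).prod (LinearMap.range D.mulVecLin) := by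
    ext x
    constructor
    · rintro ⟨y, ⟨v, rfl⟩, rfl⟩
      refine ⟨⟨v ∘ Sum.inl, ?_⟩, ⟨v ∘ Sum.inr, ?_⟩⟩ <;>
        · ext i
          simp [e, Matrix.mulVecLin_apply, Matrix.fromBlocks_mulVec, Matrix.zero_mulVec,
            LinearEquiv.sumArrowLequivProdArrow]
    · rintro ⟨⟨u, hu⟩, ⟨w, hw⟩⟩
      refine ⟨(Matrix.fromBlocks A 0 0 D).mulVec (Sum.elim u w), ⟨Sum.elim u w, rfl⟩, ?_⟩
      ext i <;>
        simp [e, Matrix.mulVecLin_apply, Matrix.fromBlocks_mulVec, Matrix.zero_mulVec,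
          LinearEquiv.sumArrowLequivProdArrow, ← hu, ← hw, Matrix.mulVecLin_apply]
  rw [Matrix.rank, Matrix.rank, Matrix.rank, ← LinearEquiv.finrank_map_eq e, hmap,
    finrank_prod_submodule]

lemma rank_fromBlocks_invertible₁₁ {m n : Type*} [Fintype m] [Fintype n] [DecidableEq m]
    [DecidableEq n] (A : Matrix m m K) (B : Matrix m n K) (C : Matrix n m K) (D : Matrix n n K)
    [Invertible A] :
    (Matrix.fromBlocks A B C D).rank = Fintype.card m + (D - C * ⅟A * B).rank := by
  rw [Matrix.fromBlocks_eq_of_invertible₁₁ A B C D,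
    Matrix.rank_mul_eq_left_of_isUnit_det _ _ (by
      rw [Matrix.det_fromBlocks_zero₂₁]; simp),
    Matrix.rank_mul_eq_right_of_isUnit_det _ _ (by
      rw [Matrix.det_fromBlocks_zero₁₂]; simp),
    rank_fromBlocks_diag, Matrix.rank_of_isUnit A (isUnit_of_invertible A)]

end Aux

/-- If `M` is symmetric over `GF(2)` with `M a a = 0`, `M b b = 1` and
`M a b = 1` (`a ≠ b`), and `M''` is the matrix with entries
`M x y + M x a · M y b + M x b · M y a + M x a · M y a` (for `x, y ∉ {a,b}`),
then `rank M = rank M'' + 2`; equivalently `M` and `M''` have the same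
nullity. -/
theorem rank_pivot_localcomp_minor {n : ℕ} (hn : 2 ≤ n)
    (M : Matrix (Fin n) (Fin n) (ZMod 2)) (hsym : M.IsSymm)
    (a b : Fin n) (hab : a ≠ b)
    (haa : M a a = 0) (hbb : M b b = 1) (hMab : M a b = 1) :
    M.rank =
        (Matrix.of fun x y : {z : Fin n // z ≠ a ∧ z ≠ b} =>
          M x.1 y.1 + M x.1 a * M y.1 b + M x.1 b * M y.1 a + M x.1 a * M y.1 a).rank
          + 2 ∧
    n - M.rank =
      (n - 2) -
        (Matrix.of fun x y : {z : Fin n // z ≠ a ∧ z ≠ b} =>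
          M x.1 y.1 + M x.1 a * M y.1 b + M x.1 b * M y.1 a + M x.1 a * M y.1 a).rank := by
  classical
  set s := {z : Fin n // z ≠ a ∧ z ≠ b}
  set M'' : Matrix s s (ZMod 2) := Matrix.of fun x y : s =>
    M x.1 y.1 + M x.1 a * M y.1 b + M x.1 b * M y.1 a + M x.1 a * M y.1 a with hM''
  -- the equivalence Fin 2 ⊕ s ≃ Fin n
  let p : Fin n → Prop := fun z => z = a ∨ z = b
  let e2 : Fin 2 ≃ {z : Fin n // p z} :=
    { toFun := ![⟨a, Or.inl rfl⟩, ⟨b, Or.inr rfl⟩]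
      invFun := fun z => if z.1 = a then 0 else 1
      left_inv := by
        intro i
        fin_cases i
        · simp
        · simp [hab.symm]
      right_inv := by
        rintro ⟨z, hz | hz⟩ <;> subst hz
        · simp
        · simp [Ne.symm hab] }
  let es : s ≃ {z : Fin n // ¬ p z} :=
    Equiv.subtypeEquivRight (fun z => by simp [p, not_or, and_comm])
  let E : (Fin 2 ⊕ s) ≃ Fin n := (Equiv.sumCongr e2 es).trans (Equiv.sumCompl p)
  have hE0 : E (Sum.inl 0) = a := rfl
  have hE1 : E (Sum.inl 1) = b := rfl
  have hEr : ∀ x : s, E (Sum.inr x) = x.1 := fun x => rfl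
  -- blocks
  let A' : Matrix (Fin 2) (Fin 2) (ZMod 2) := M.submatrix (fun i => E (Sum.inl i)) (fun j => E (Sum.inl j))
  let B' : Matrix (Fin 2) s (ZMod 2) := M.submatrix (fun i => E (Sum.inl i)) (fun j => E (Sum.inr j))
  let C' : Matrix s (Fin 2) (ZMod 2) := M.submatrix (fun i => E (Sum.inr i)) (fun j => E (Sum.inl j))
  let D' : Matrix s s (ZMod 2) := M.submatrix (fun i => E (Sum.inr i)) (fun j => E (Sum.inr j))
  have hbl : M.submatrix E E = Matrix.fromBlocks A' B' C' D' := by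
    ext (i | i) (j | j) <;> rfl
  have hA' : A' = !![0, 1; 1, 1] := by
    ext i j
    fin_cases i <;> fin_cases j <;>
      simp [A', hE0, hE1, haa, hbb, hMab, hsym.apply]
  have hMba : M b a = 1 := by rw [hsym.apply]; exact hMab
  -- invertibility of A'
  have hinv : Invertible A' := by
    refine ⟨!![1, 1; 1, 0], ?_, ?_⟩ <;> (rw [hA']; decide)
  -- Schur complement equals M''
  have hschur : D' - C' * ⅟A' * B' = M'' := by
    have hinvA : (⅟A' : Matrix (Fin 2) (Fin 2) (ZMod 2)) = !![1, 1; 1, 0] :=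
      invOf_eq_right_inv (by rw [hA']; decide)
    ext x y
    simp only [Matrix.sub_apply, Matrix.mul_apply, hinvA, Fin.sum_univ_two]
    simp only [D', C', B', Matrix.submatrix_apply, hE0, hE1, hEr, hM'', Matrix.of_apply,
      Matrix.cons_val', Matrix.cons_val_zero, Matrix.cons_val_one, Matrix.head_cons,
      Matrix.empty_val', Matrix.cons_val_fin_one, Matrix.head_fin_const]
    have h1 : M a y.1 = M y.1 a := hsym.apply _ _
    have h2 : M b y.1 = M y.1 b := hsym.apply _ _
    rw [h1, h2, CharTwo.sub_eq_add]
    ring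
  have hrank : M.rank = 2 + M''.rank := by
    have := rank_fromBlocks_invertible₁₁ A' B' C' D' (K := ZMod 2)
    rw [← Matrix.rank_submatrix M E E, hbl, this, hschur]
    simp
  have hcard : Fintype.card s = n - 2 := by
    have := Fintype.card_congr E
    simp [Fintype.card_sum] at this
    omega
  have hle : M''.rank ≤ n - 2 := hcard ▸ Matrix.rank_le_card_width M''
  constructor
  · omega
  · omega
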